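/- Let h : (ℝ^d)^m → ℝ be invariant under all permutations of its m arguments, where the arguments range over a countable set 𝒳 ⊆ ℝ^d. Then there exist functions ψ : 𝒳 → ℝ^M (for some M) and ρ : ℝ^M → ℝ such that h(x₁,…,x_m) = ρ(∑_{k=1}^m ψ(x_k)). -/

import Mathlib

open Matrix

/-- Uniqueness of base-(m+2) representations with digits ≤ m, phrased for multisets
of exponents with at most `m` elements. -/
lemma deep_sets_pow_sum_inj (m : ℕ) :
    ∀ (B : ℕ) (s t : Multiset ℕ), s.card ≤ m → t.card ≤ m →
      (∀ a ∈ s, a < B) → (∀ a ∈ t, a < B) →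
      (s.map fun a => (m+2)^a).sum = (t.map fun a => (m+2)^a).sum → s = t := by
  intro B
  induction B with
  | zero =>
    intro s t _ _ hs ht _
    have hs0 : s = 0 := Multiset.eq_zero_of_forall_notMem fun a ha => by
      exact absurd (hs a ha) (Nat.not_lt_zero a)
    have ht0 : t = 0 := Multiset.eq_zero_of_forall_notMem fun a ha => by
      exact absurd (ht a ha) (Nat.not_lt_zero a)
    rw [hs0, ht0]
  | succ B ih =>
    intro s t hsc htc hs ht hsum
    classical
    set P : ℕ := (m+2)^B with hP
    have hPpos : 0 < P := Nat.pow_pos (by omega)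
    -- decompose a multiset into copies of B plus the rest
    have key : ∀ (u : Multiset ℕ), u.card ≤ m → (∀ a ∈ u, a < B + 1) →
        (u.map fun a => (m+2)^a).sum
          = (u.count B) * P + ((u.filter (fun a => ¬ a = B)).map fun a => (m+2)^a).sum ∧
        ((u.filter (fun a => ¬ a = B)).map fun a => (m+2)^a).sum < P := by
      intro u huc hu
      have hdec : u.filter (fun a => a = B) + u.filter (fun a => ¬ a = B) = u :=
        Multiset.filter_add_not _ u
      have hrep : u.filter (fun a => a = B) = Multiset.replicate (u.count B) B := by
        simpa using Multiset.filter_eq' u B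
      constructor
      · conv_lhs => rw [← hdec]
        rw [Multiset.map_add, Multiset.sum_add, hrep, Multiset.map_replicate,
          Multiset.sum_replicate, smul_eq_mul]
      · -- bound the remainder
        set u₀ := u.filter (fun a => ¬ a = B) with hu₀
        have hlt : ∀ a ∈ u₀, a < B := by
          intro a ha
          have h1 := Multiset.of_mem_filter ha
          have h2 := hu a (Multiset.mem_of_mem_filter ha)
          omega
        have hb : ∀ x ∈ u₀.map (fun a => (m+2)^(a+1)), x ≤ P := by
          intro x hx
          obtain ⟨a, ha, rfl⟩ := Multiset.mem_map.1 hx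
          exact Nat.pow_le_pow_right (by omega) (hlt a ha)
        have hsum1 : (u₀.map fun a => (m+2)^(a+1)).sum ≤ (u₀.map fun a => (m+2)^(a+1)).card • P :=
          Multiset.sum_le_card_nsmul _ _ hb
        have hcard : (u₀.map fun a => (m+2)^(a+1)).card ≤ m := by
          rw [Multiset.card_map]
          exact le_trans (Multiset.card_le_card (Multiset.filter_le _ u)) huc
        have h2 : (u₀.map fun a => (m+2)^(a+1)).sum ≤ m * P := by
          calc (u₀.map fun a => (m+2)^(a+1)).sum ≤ (u₀.map fun a => (m+2)^(a+1)).card • P := hsum1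
            _ ≤ m * P := by rw [smul_eq_mul]; exact Nat.mul_le_mul_right P hcard
        have h3 : (u₀.map fun a => (m+2)^(a+1)).sum = (m+2) * (u₀.map fun a => (m+2)^a).sum := by
          rw [← Multiset.sum_map_mul_left]
          congr 1
          apply Multiset.map_congr rfl
          intro a _
          ring
        have h4 : (m+2) * (u₀.map fun a => (m+2)^a).sum ≤ m * P := by rw [← h3]; exact h2
        by_contra hcon
        push_neg at hcon
        have : (m+2) * P ≤ (m+2) * (u₀.map fun a => (m+2)^a).sum :=
          Nat.mul_le_mul_left _ hcon
        have : (m+2) * P ≤ m * P := le_trans this h4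
        nlinarith [hPpos]
    obtain ⟨hseq, hslt⟩ := key s hsc hs
    obtain ⟨hteq, htlt⟩ := key t htc ht
    rw [hseq, hteq] at hsum
    have huniq : ∀ a b r₁ r₂ : ℕ, r₁ < P → r₂ < P → a * P + r₁ = b * P + r₂ →
        a = b ∧ r₁ = r₂ := by
      intro a b r₁ r₂ h1 h2 h3
      have step : ∀ x y : ℕ, x < y → x * P + P ≤ y * P := by
        intro x y hxy
        calc x * P + P = (x + 1) * P := by ring
          _ ≤ y * P := Nat.mul_le_mul_right P hxy
      have hab : a = b := by
        rcases Nat.lt_trichotomy a b with hlt | he | hgt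
        · have := step a b hlt; omega
        · exact he
        · have := step b a hgt; omega
      subst hab
      exact ⟨rfl, by omega⟩
    obtain ⟨hcount, hrest⟩ := huniq _ _ _ _ hslt htlt hsum
    -- apply the induction hypothesis to the filtered multisets
    have hfilt : s.filter (fun a => ¬ a = B) = t.filter (fun a => ¬ a = B) := by
      apply ih
      · exact le_trans (Multiset.card_le_card (Multiset.filter_le _ s)) hsc
      · exact le_trans (Multiset.card_le_card (Multiset.filter_le _ t)) htc
      · intro a ha
        have h1 := Multiset.of_mem_filter ha
        have h2 := hs a (Multiset.mem_of_mem_filter ha)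
        omega
      · intro a ha
        have h1 := Multiset.of_mem_filter ha
        have h2 := ht a (Multiset.mem_of_mem_filter ha)
        omega
      · exact hrest
    have hdecs : s.filter (fun a => a = B) + s.filter (fun a => ¬ a = B) = s :=
      Multiset.filter_add_not _ s
    have hdect : t.filter (fun a => a = B) + t.filter (fun a => ¬ a = B) = t :=
      Multiset.filter_add_not _ t
    rw [← hdecs, ← hdect, hfilt]
    congr 1
    rw [show (s.filter (fun a => a = B)) = Multiset.replicate (s.count B) B from by
          simpa using Multiset.filter_eq' s B,
        show (t.filter (fun a => a = B)) = Multiset.replicate (t.count B) B from by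
          simpa using Multiset.filter_eq' t B, hcount]

/-- Two tuples with equal multisets of values differ by a permutation. -/
lemma deep_sets_exists_perm {m : ℕ} (g₁ g₂ : Fin m → ℕ)
    (hmul : Multiset.map g₁ Finset.univ.val = Multiset.map g₂ Finset.univ.val) :
    ∃ σ : Equiv.Perm (Fin m), ∀ i, g₂ (σ i) = g₁ i := by
  classical
  have hcard : ∀ c, Fintype.card {i // g₁ i = c} = Fintype.card {i // g₂ i = c} := by
    intro c
    have hc := congrArg (Multiset.count c) hmul
    rw [Multiset.count_map, Multiset.count_map] at hc
    simp only [Fintype.card_subtype, Finset.card, Finset.filter_val]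
    simpa [eq_comm] using hc
  exact ⟨Equiv.ofFiberEquiv (fun c => Fintype.equivOfCardEq (hcard c)),
    fun i => Equiv.ofFiberEquiv_map _ i⟩

/-- Deep Sets representation (Zaheer et al. 2017, Theorem 2): a permutation
invariant function `h` of `m` arguments ranging over a countable set `𝒳 ⊆ ℝ^d` has a
sum-decomposition `h(x₁,…,x_m) = ρ(∑ ψ(x_k))`. -/
theorem deep_sets_representation (d m : ℕ) (hd : 0 < d) (hm : 0 < m)
    (𝒳 : Set (Fin d → ℝ)) (h𝒳 : 𝒳.Countable)
    (h : (Fin m → (Fin d → ℝ)) → ℝ)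
    (hinv : ∀ (σ : Equiv.Perm (Fin m)) (x : Fin m → (Fin d → ℝ)),
      (∀ i, x i ∈ 𝒳) → h (x ∘ σ) = h x) :
    ∃ (M : ℕ) (ψ : (Fin d → ℝ) → (Fin M → ℝ)) (ρ : (Fin M → ℝ) → ℝ),
      ∀ x : Fin m → (Fin d → ℝ), (∀ i, x i ∈ 𝒳) →
        h x = ρ (∑ k, ψ (x k)) := by
  classical
  obtain ⟨f, hf⟩ : ∃ f : 𝒳 → ℕ, Function.Injective f := by
    have : Countable 𝒳 := h𝒳.to_subtype
    exact Countable.exists_injective_nat 𝒳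
  set e : (Fin d → ℝ) → ℕ := fun x => if hx : x ∈ 𝒳 then f ⟨x, hx⟩ else 0 with he
  have he_inj : ∀ x ∈ 𝒳, ∀ y ∈ 𝒳, e x = e y → x = y := by
    intro x hx y hy hxy
    rw [he] at hxy
    simp only [dif_pos hx, dif_pos hy] at hxy
    exact congrArg Subtype.val (hf hxy)
  -- key: equal encoded sums imply equal values of h
  have key : ∀ x y : Fin m → (Fin d → ℝ), (∀ i, x i ∈ 𝒳) → (∀ i, y i ∈ 𝒳) →
      (∑ k, (m+2)^(e (x k)) : ℕ) = ∑ k, (m+2)^(e (y k)) → h x = h y := by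
    intro x y hx hy hsum
    set B : ℕ := (Finset.univ.sup (fun k => e (x k)) ⊔ Finset.univ.sup (fun k => e (y k))) + 1
      with hB
    have hmul : Multiset.map (fun k => e (x k)) Finset.univ.val
        = Multiset.map (fun k => e (y k)) Finset.univ.val := by
      apply deep_sets_pow_sum_inj m B
      · rw [Multiset.card_map]
        exact le_of_eq (by simp)
      · rw [Multiset.card_map]
        exact le_of_eq (by simp)
      · intro a ha
        obtain ⟨k, _, rfl⟩ := Multiset.mem_map.1 ha
        have : e (x k) ≤ Finset.univ.sup (fun k => e (x k)) :=
          Finset.le_sup (f := fun k => e (x k)) (Finset.mem_univ k)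
        omega
      · intro a ha
        obtain ⟨k, _, rfl⟩ := Multiset.mem_map.1 ha
        have : e (y k) ≤ Finset.univ.sup (fun k => e (y k)) :=
          Finset.le_sup (f := fun k => e (y k)) (Finset.mem_univ k)
        omega
      · rw [Multiset.map_map, Multiset.map_map]
        exact hsum
    obtain ⟨σ, hσ⟩ := deep_sets_exists_perm _ _ hmul
    have hxy : x = y ∘ σ := by
      funext i
      exact (he_inj _ (hy (σ i)) _ (hx i) (hσ i)).symm
    rw [hxy]
    exact (hinv σ y hy)
  refine ⟨1, fun x => fun _ => (((m+2)^(e x) : ℕ) : ℝ), fun v =>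
    if hv : ∃ y : Fin m → (Fin d → ℝ), (∀ i, y i ∈ 𝒳) ∧
        (∑ k, (fun _ => (((m+2)^(e (y k)) : ℕ) : ℝ) : Fin 1 → ℝ)) = v
      then h hv.choose else 0, ?_⟩
  intro x hx
  have hQ : ∃ y : Fin m → (Fin d → ℝ), (∀ i, y i ∈ 𝒳) ∧
      (∑ k, (fun _ => (((m+2)^(e (y k)) : ℕ) : ℝ) : Fin 1 → ℝ))
        = ∑ k, (fun _ => (((m+2)^(e (x k)) : ℕ) : ℝ) : Fin 1 → ℝ) := ⟨x, hx, rfl⟩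
  simp only [dif_pos hQ]
  obtain ⟨hy1, hy2⟩ := hQ.choose_spec
  apply key x _ hx hy1
  have h0 := congrFun hy2 0
  simp only [Finset.sum_apply] at h0
  exact_mod_cast h0.symm
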